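/- Fix positive integers m, w, d, a probability space Ω, and random hash functions h_1, …, h_d : Ω → (Fin m → Fin w) that are mutually independent, each pairwise uniform in the sense that for all distinct i, i' ∈ Fin m, P(h_j(i) = h_j(i')) ≤ 1/w. Let y ∈ ℝ^m have nonnegative entries with ‖y‖₁ ≤ k, and let ŷ_i = min_{1 ≤ j ≤ d} S(y)_{j, h_j(i)} be the count-min estimate of coordinate i. Let ε > 0 and δ ∈ (0,1). If w ≥ e·k/ε and d ≥ ln(m/δ), then with probability at least 1 − δ, simultaneously for every coordinate i ∈ Fin m, y_i ≤ ŷ_i ≤ y_i + ε. -/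

import Mathlib

open Finset MeasureTheory ProbabilityTheory

/-- The count-min sketch of width `w` and depth `d` for `y : Fin m → ℝ`. -/
noncomputable def cmSketch {m w d : ℕ} (h : Fin d → Fin m → Fin w)
    (y : Fin m → ℝ) (j : Fin d) (c : Fin w) : ℝ :=
  ∑ i ∈ Finset.univ.filter (fun i => h j i = c), y i

/-- The count-min estimate of coordinate `i`: `ŷ_i = min_j S(y)_{j, h j i}`. -/
noncomputable def cmEstimate {m w d : ℕ} (hd : 0 < d) (h : Fin d → Fin m → Fin w)
    (y : Fin m → ℝ) (i : Fin m) : ℝ :=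
  Finset.univ.inf' ⟨⟨0, hd⟩, Finset.mem_univ _⟩ (fun j => cmSketch h y j (h j i))

private lemma allMeas {α : Type*} [Countable α] [MeasurableSpace α]
    [MeasurableSingletonClass α] (s : Set α) : MeasurableSet s :=
  s.to_countable.measurableSet

theorem cm_uniform_error_bound
    (m w d : ℕ) (hm : 0 < m) (hw : 0 < w) (hd : 0 < d)
    {Ω : Type*} [MeasureSpace Ω] [IsProbabilityMeasure (ℙ : Measure Ω)]
    (h : Fin d → Ω → Fin m → Fin w) (hmeas : ∀ j, Measurable (h j))
    (hindep : iIndepFun h ℙ)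
    (hpair : ∀ (j : Fin d) (i i' : Fin m), i ≠ i' →
        ℙ {ω | h j ω i = h j ω i'} ≤ 1 / w)
    (y : Fin m → ℝ) (hy : ∀ i, 0 ≤ y i) (k : ℝ) (hk : (∑ i, y i) ≤ k)
    (ε δ : ℝ) (hε : 0 < ε) (hδ0 : 0 < δ) (hδ1 : δ < 1)
    (hwε : Real.exp 1 * k / ε ≤ w) (hdδ : Real.log (m / δ) ≤ d) :
    1 - ENNReal.ofReal δ ≤
      ℙ {ω | ∀ i : Fin m,
              y i ≤ cmEstimate hd (fun j => h j ω) y i ∧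
              cmEstimate hd (fun j => h j ω) y i ≤ y i + ε} := by
  classical
  -- the excess of the sketch row above `y i`
  set X : (Fin m → Fin w) → Fin m → ℝ :=
    fun g i => ∑ i' ∈ Finset.univ.erase i, if g i' = g i then y i' else 0 with hX
  have hrow : ∀ (g : Fin m → Fin w) (i : Fin m) (j : Fin d) (h' : Fin d → Fin m → Fin w),
      h' j = g → cmSketch h' y j (g i) = y i + X g i := by
    intro g i j h' hg
    have : cmSketch h' y j (g i) = ∑ i', if g i' = g i then y i' else 0 := by
      rw [cmSketch, hg, Finset.sum_filter]
    rw [this, ← Finset.sum_erase_add _ _ (Finset.mem_univ i), if_pos rfl, hX]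
    ring
  have hXnonneg : ∀ g i, 0 ≤ X g i := by
    intro g i
    apply Finset.sum_nonneg
    intro i' _
    split <;> simp [hy i']
  -- lower bound always holds
  have hlow : ∀ (ω : Ω) (i : Fin m), y i ≤ cmEstimate hd (fun j => h j ω) y i := by
    intro ω i
    apply Finset.le_inf'
    intro j _
    rw [hrow (h j ω) i j _ rfl]
    linarith [hXnonneg (h j ω) i]
  -- bad events
  set A : Fin m → Set (Fin m → Fin w) := fun i => {g | ε < X g i} with hA
  -- per-row probability bound
  have e1pos : (0:ℝ) < Real.exp (-1) := Real.exp_pos _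
  have hrowbound : ∀ (j : Fin d) (i : Fin m),
      ℙ (h j ⁻¹' A i) ≤ ENNReal.ofReal (Real.exp (-1)) := by
    intro j i
    set f : Ω → ENNReal := fun ω => ENNReal.ofReal (X (h j ω) i) with hf
    have hfmeas : Measurable f := by
      have : Measurable (fun g : Fin m → Fin w => ENNReal.ofReal (X g i)) :=
        fun s _ => allMeas _
      exact this.comp (hmeas j)
    have hint : ∫⁻ ω, f ω ∂ℙ ≤ ENNReal.ofReal (ε * Real.exp (-1)) := by
      have h1 : ∀ ω, f ω = ∑ i' ∈ Finset.univ.erase i,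
          ENNReal.ofReal (if h j ω i' = h j ω i then y i' else 0) := by
        intro ω
        rw [hf, hX]
        exact ENNReal.ofReal_sum_of_nonneg (fun i' _ => by split <;> simp [hy i'])
      have h2 : ∀ i' : Fin m, (fun ω => ENNReal.ofReal
            (if h j ω i' = h j ω i then y i' else 0)) =
          Set.indicator (h j ⁻¹' {g | g i' = g i}) (fun _ => ENNReal.ofReal (y i')) := by
        intro i'
        ext ω
        by_cases hc : h j ω i' = h j ω i
        · simp [Set.indicator_apply, Set.mem_preimage, Set.mem_setOf_eq, hc]
        · simp [Set.indicator_apply, Set.mem_preimage, Set.mem_setOf_eq, hc]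
      calc ∫⁻ ω, f ω ∂ℙ
          = ∑ i' ∈ Finset.univ.erase i, ∫⁻ ω, ENNReal.ofReal
              (if h j ω i' = h j ω i then y i' else 0) ∂ℙ := by
            simp_rw [h1]
            refine lintegral_finset_sum _ (fun i' _ => ?_)
            rw [h2 i']
            exact (measurable_const.indicator ((hmeas j) (allMeas _)))
        _ = ∑ i' ∈ Finset.univ.erase i,
              ENNReal.ofReal (y i') * ℙ (h j ⁻¹' {g | g i' = g i}) := by
            refine Finset.sum_congr rfl (fun i' _ => ?_)
            rw [h2 i']
            exact lintegral_indicator_const ((hmeas j) (allMeas _)) _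
        _ ≤ ∑ i' ∈ Finset.univ.erase i, ENNReal.ofReal (y i') * (1 / w) := by
            refine Finset.sum_le_sum (fun i' hi' => ?_)
            refine mul_le_mul_right ?_ _
            have hne : i ≠ i' := (Finset.ne_of_mem_erase hi').symm
            have hset : h j ⁻¹' {g | g i' = g i} = {ω | h j ω i' = h j ω i} := rfl
            rw [hset]
            exact hpair j i' i (fun hc => hne hc.symm)
        _ = ENNReal.ofReal (∑ i' ∈ Finset.univ.erase i, y i') * (1 / w) := by
            rw [ENNReal.ofReal_sum_of_nonneg (fun i' _ => hy i'), Finset.sum_mul]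
        _ ≤ ENNReal.ofReal (ε * Real.exp (-1)) := by
            have hsum : (∑ i' ∈ Finset.univ.erase i, y i') ≤ k :=
              le_trans (Finset.sum_le_sum_of_subset_of_nonneg
                (Finset.erase_subset _ _) (fun i' _ _ => hy i')) hk
            have hkb : k ≤ ε * Real.exp (-1) * w := by
              have hexp : (0:ℝ) < Real.exp 1 := Real.exp_pos 1
              have h' : Real.exp 1 * k ≤ ε * w := by
                rw [div_le_iff₀ hε] at hwε; linarith
              rw [Real.exp_neg]
              have h2 : k ≤ ε * w / Real.exp 1 := by
                rw [le_div_iff₀ hexp]; linarith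
              calc k ≤ ε * w / Real.exp 1 := h2
                _ = ε * (Real.exp 1)⁻¹ * w := by ring
            calc ENNReal.ofReal (∑ i' ∈ Finset.univ.erase i, y i') * (1 / w)
                ≤ ENNReal.ofReal (ε * Real.exp (-1) * w) * (1 / w) := by
                  exact mul_le_mul_left (ENNReal.ofReal_le_ofReal
                    (le_trans hsum hkb)) _
              _ = ENNReal.ofReal (ε * Real.exp (-1)) * (w * (1 / w)) := by
                  rw [ENNReal.ofReal_mul (by positivity), ENNReal.ofReal_natCast]
                  ring
              _ = ENNReal.ofReal (ε * Real.exp (-1)) := by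
                  rw [one_div, ENNReal.mul_inv_cancel (by exact_mod_cast hw.ne')
                    (ENNReal.natCast_ne_top w), mul_one]
    -- Markov
    have hsub : h j ⁻¹' A i ⊆ {ω | ENNReal.ofReal ε ≤ f ω} := by
      intro ω hω
      exact ENNReal.ofReal_le_ofReal (le_of_lt hω)
    have hmarkov := mul_meas_ge_le_lintegral₀ (μ := ℙ) hfmeas.aemeasurable (ENNReal.ofReal ε)
    have : ENNReal.ofReal ε * ℙ (h j ⁻¹' A i) ≤
        ENNReal.ofReal ε * ENNReal.ofReal (Real.exp (-1)) := by
      calc ENNReal.ofReal ε * ℙ (h j ⁻¹' A i)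
          ≤ ENNReal.ofReal ε * ℙ {ω | ENNReal.ofReal ε ≤ f ω} :=
            mul_le_mul_right (measure_mono hsub) _
        _ ≤ ∫⁻ ω, f ω ∂ℙ := hmarkov
        _ ≤ ENNReal.ofReal (ε * Real.exp (-1)) := hint
        _ = ENNReal.ofReal ε * ENNReal.ofReal (Real.exp (-1)) :=
            ENNReal.ofReal_mul hε.le
    exact (ENNReal.mul_le_mul_iff_right (by simp [hε]) ENNReal.ofReal_ne_top).mp this
  -- intersection over rows
  have hBbound : ∀ i : Fin m, ℙ (⋂ j, h j ⁻¹' A i) ≤ ENNReal.ofReal (δ / m) := by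
    intro i
    have hiInter : (⋂ j, h j ⁻¹' A i) = ⋂ j ∈ (Finset.univ : Finset (Fin d)),
        h j ⁻¹' A i := by simp
    have hprod := (iIndepFun_iff_measure_inter_preimage_eq_mul.mp hindep)
      (Finset.univ : Finset (Fin d)) (sets := fun _ => A i)
      (fun j _ => allMeas _)
    rw [hiInter, hprod]
    calc ∏ j : Fin d, ℙ (h j ⁻¹' A i)
        ≤ ∏ _j : Fin d, ENNReal.ofReal (Real.exp (-1)) :=
          Finset.prod_le_prod' (fun j _ => hrowbound j i)
      _ = ENNReal.ofReal (Real.exp (-1)) ^ d := by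
          rw [Finset.prod_const, Finset.card_univ, Fintype.card_fin]
      _ = ENNReal.ofReal (Real.exp (-(d:ℝ))) := by
          rw [← ENNReal.ofReal_pow e1pos.le, ← Real.exp_nat_mul]
          congr 1
          ring
      _ ≤ ENNReal.ofReal (δ / m) := by
          apply ENNReal.ofReal_le_ofReal
          have hmδ : (0:ℝ) < (m:ℝ) / δ := by positivity
          have h3 : Real.exp (-(d:ℝ)) ≤ Real.exp (-Real.log ((m:ℝ) / δ)) :=
            Real.exp_le_exp.mpr (by linarith)
          have h4 : Real.exp (-Real.log ((m:ℝ) / δ)) = δ / m := by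
            rw [Real.exp_neg, Real.exp_log hmδ, inv_div]
          linarith
  -- the good set and union bound
  set G : Set Ω := {ω | ∀ i : Fin m,
      y i ≤ cmEstimate hd (fun j => h j ω) y i ∧
      cmEstimate hd (fun j => h j ω) y i ≤ y i + ε} with hG
  have hGmeas : MeasurableSet G := by
    have hφ : Measurable (fun ω => fun j : Fin d => h j ω) :=
      measurable_pi_lambda _ (fun j => hmeas j)
    have : G = (fun ω => fun j : Fin d => h j ω) ⁻¹' {H | ∀ i : Fin m,
        y i ≤ cmEstimate hd H y i ∧ cmEstimate hd H y i ≤ y i + ε} := rfl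
    rw [this]
    exact hφ (allMeas _)
  have hGc : Gᶜ ⊆ ⋃ i : Fin m, ⋂ j, h j ⁻¹' A i := by
    intro ω hω
    simp only [hG, Set.mem_compl_iff, Set.mem_setOf_eq, not_forall] at hω
    obtain ⟨i, hi⟩ := hω
    have hbad : y i + ε < cmEstimate hd (fun j => h j ω) y i := by
      by_contra hc
      exact hi ⟨hlow ω i, le_of_not_gt hc⟩
    refine Set.mem_iUnion.mpr ⟨i, Set.mem_iInter.mpr (fun j => ?_)⟩
    have := (Finset.lt_inf'_iff _).mp hbad j (Finset.mem_univ j)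
    rw [hrow (h j ω) i j _ rfl] at this
    simpa [hA] using (by linarith : ε < X (h j ω) i)
  have hGcbound : ℙ Gᶜ ≤ ENNReal.ofReal δ := by
    calc ℙ Gᶜ ≤ ℙ (⋃ i : Fin m, ⋂ j, h j ⁻¹' A i) := measure_mono hGc
      _ ≤ ∑ i : Fin m, ℙ (⋂ j, h j ⁻¹' A i) := measure_iUnion_fintype_le _ _
      _ ≤ ∑ _i : Fin m, ENNReal.ofReal (δ / m) :=
          Finset.sum_le_sum (fun i _ => hBbound i)
      _ = (m : ENNReal) * ENNReal.ofReal (δ / m) := by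
          rw [Finset.sum_const, Finset.card_univ, Fintype.card_fin, nsmul_eq_mul]
      _ = ENNReal.ofReal (m * (δ / m)) := by
          rw [ENNReal.ofReal_mul (by positivity), ENNReal.ofReal_natCast]
      _ = ENNReal.ofReal δ := by
          congr 1
          field_simp
  rw [tsub_le_iff_right]
  calc (1 : ENNReal) = ℙ G + ℙ Gᶜ := by
        rw [measure_add_measure_compl hGmeas, measure_univ]
    _ ≤ ℙ G + ENNReal.ofReal δ := add_le_add_right hGcbound _
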